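/- Let 𝒜, ℬ, K be finite sets, let d, d', s be positive integers, and let E_H ⊆ 𝒜 × ℬ be a bipartite edge set such that every u ∈ 𝒜 is incident to exactly d edges and every v ∈ ℬ is incident to exactly d' edges. Let col : E_H → K be a coloring such that for every t ∈ K the color class M_t = col⁻¹(t) is a matching (no two edges of M_t share an endpoint) of size exactly s. For v ∈ ℬ let K_v = {t ∈ K : some edge incident to v has color t}. Let α ≥ 1 be a real number. Suppose that for every u ∈ 𝒜 there exists a set J_u ⊆ K with |J_u| ≤ d/α such that for every edge (u,v) ∈ E_H one has |K_v \ J_u| ≤ d'/α. Then for every S ⊆ 𝒜 and W ⊆ ℬ such that (i) every v ∈ W has some u ∈ S with (u,v) ∈ E_H, and (ii) for every t ∈ K there is some v ∈ W with t ∈ K_v, it holds that (|ℬ|/|𝒜|) · |S| + |W| ≥ α · |ℬ|/s. -/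

import Mathlib

/-- the key gap lemma for Zosin–Khuller-type instances. -/
theorem stmt_1 {V₁ V₂ V₃ : Type*} [DecidableEq V₁] [DecidableEq V₂] [DecidableEq V₃]
    (𝒜 : Finset V₁) (ℬ : Finset V₂) (K : Finset V₃)
    (d d' s : ℕ) (hd : 0 < d) (hd' : 0 < d') (hs : 0 < s)
    (EH : Finset (V₁ × V₂)) (hEH : EH ⊆ 𝒜 ×ˢ ℬ)
    (col : V₁ × V₂ → V₃) (hcol : ∀ e ∈ EH, col e ∈ K)
    (hdegA : ∀ u ∈ 𝒜, (EH.filter (fun e => e.1 = u)).card = d)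
    (hdegB : ∀ v ∈ ℬ, (EH.filter (fun e => e.2 = v)).card = d')
    (hmatch : ∀ t ∈ K, ∀ e ∈ EH, ∀ e' ∈ EH,
      col e = t → col e' = t → e ≠ e' → e.1 ≠ e'.1 ∧ e.2 ≠ e'.2)
    (hsize : ∀ t ∈ K, (EH.filter (fun e => col e = t)).card = s)
    (α : ℝ) (hα : 1 ≤ α)
    (hJ : ∀ u ∈ 𝒜, ∃ J ⊆ K, (J.card : ℝ) ≤ d / α ∧
      ∀ e ∈ EH, e.1 = u →
        (((K.filter (fun t => ∃ e' ∈ EH, e'.2 = e.2 ∧ col e' = t)) \ J).card : ℝ)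
          ≤ d' / α)
    (S : Finset V₁) (hS : S ⊆ 𝒜) (W : Finset V₂) (hW : W ⊆ ℬ)
    (hi : ∀ v ∈ W, ∃ u ∈ S, (u, v) ∈ EH)
    (hii : ∀ t ∈ K, ∃ v ∈ W, ∃ e ∈ EH, e.2 = v ∧ col e = t) :
    α * ℬ.card / s ≤ ((ℬ.card : ℝ) / 𝒜.card) * S.card + W.card := by
  classical
  have hα0 : (0:ℝ) < α := lt_of_lt_of_le one_pos hα
  -- counting identities
  have hA : EH.card = d * 𝒜.card := by
    rw [Finset.card_eq_sum_card_fiberwise (f := Prod.fst) (t := 𝒜)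
      (fun e he => (Finset.mem_product.1 (hEH he)).1)]
    rw [Finset.sum_congr rfl hdegA, Finset.sum_const, smul_eq_mul, mul_comm]
  have hB : EH.card = d' * ℬ.card := by
    rw [Finset.card_eq_sum_card_fiberwise (f := Prod.snd) (t := ℬ)
      (fun e he => (Finset.mem_product.1 (hEH he)).2)]
    rw [Finset.sum_congr rfl hdegB, Finset.sum_const, smul_eq_mul, mul_comm]
  have hKc : EH.card = s * K.card := by
    rw [Finset.card_eq_sum_card_fiberwise (f := col) (t := K) hcol]
    rw [Finset.sum_congr rfl hsize, Finset.sum_const, smul_eq_mul, mul_comm]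
  -- choices
  choose Jf hJ1 hJ2 hJ3 using hJ
  set J : V₁ → Finset V₃ := fun u => if h : u ∈ 𝒜 then Jf u h else ∅ with hJdef
  choose uf huf1 huf2 using hi
  set Kv : V₂ → Finset V₃ :=
    fun v => K.filter (fun t => ∃ e' ∈ EH, e'.2 = v ∧ col e' = t) with hKvdef
  set F : V₂ → Finset V₃ :=
    fun v => if h : v ∈ W then Kv v \ J (uf v h) else ∅ with hFdef
  have hsub : K ⊆ S.biUnion J ∪ W.biUnion F := by
    intro t ht
    obtain ⟨v, hvW, e, heEH, he2, hcolt⟩ := hii t ht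
    have htKv : t ∈ Kv v := by
      simp only [hKvdef, Finset.mem_filter]
      exact ⟨ht, e, heEH, he2, hcolt⟩
    by_cases hcase : t ∈ J (uf v hvW)
    · exact Finset.mem_union_left _ (Finset.mem_biUnion.2 ⟨uf v hvW, huf1 v hvW, hcase⟩)
    · refine Finset.mem_union_right _ (Finset.mem_biUnion.2 ⟨v, hvW, ?_⟩)
      simp only [hFdef, dif_pos hvW]
      exact Finset.mem_sdiff.2 ⟨htKv, hcase⟩
  have hcardK : K.card ≤ ∑ u ∈ S, (J u).card + ∑ v ∈ W, (F v).card :=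
    le_trans (Finset.card_le_card hsub)
      (le_trans (Finset.card_union_le _ _)
        (add_le_add (Finset.card_biUnion_le) (Finset.card_biUnion_le)))
  have hJb : ∀ u ∈ S, ((J u).card : ℝ) ≤ d / α := by
    intro u hu
    have hu𝒜 : u ∈ 𝒜 := hS hu
    simp only [hJdef, dif_pos hu𝒜]
    exact hJ2 u hu𝒜
  have hFb : ∀ v ∈ W, ((F v).card : ℝ) ≤ d' / α := by
    intro v hv
    have huS : uf v hv ∈ S := huf1 v hv
    have hu𝒜 : uf v hv ∈ 𝒜 := hS huS
    have he : (uf v hv, v) ∈ EH := huf2 v hv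
    have := hJ3 (uf v hv) hu𝒜 (uf v hv, v) he rfl
    simp only [hFdef, dif_pos hv, hJdef, dif_pos hu𝒜]
    exact this
  have key : (K.card : ℝ) ≤ S.card * (d / α) + W.card * (d' / α) := by
    have h1 : (K.card : ℝ) ≤ ∑ u ∈ S, ((J u).card : ℝ) + ∑ v ∈ W, ((F v).card : ℝ) := by
      exact_mod_cast hcardK
    have h2 : ∑ u ∈ S, ((J u).card : ℝ) ≤ S.card * (d / α) := by
      calc ∑ u ∈ S, ((J u).card : ℝ) ≤ S.card • (d / α : ℝ) :=
            Finset.sum_le_card_nsmul _ _ _ hJb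
        _ = S.card * (d / α) := by rw [nsmul_eq_mul]
    have h3 : ∑ v ∈ W, ((F v).card : ℝ) ≤ W.card * (d' / α) := by
      calc ∑ v ∈ W, ((F v).card : ℝ) ≤ W.card • (d' / α : ℝ) :=
            Finset.sum_le_card_nsmul _ _ _ hFb
        _ = W.card * (d' / α) := by rw [nsmul_eq_mul]
    linarith
  -- arithmetic
  by_cases hAe : 𝒜.card = 0
  · have hBe : ℬ.card = 0 := by
      have h0 : d' * ℬ.card = 0 := by rw [← hB, hA, hAe, mul_zero]
      rcases Nat.mul_eq_zero.1 h0 with h | h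
      · omega
      · exact h
    rw [hBe]
    simp
  · have hApos : (0:ℝ) < 𝒜.card := by positivity
    have hspos : (0:ℝ) < (s:ℝ) := by exact_mod_cast hs
    have hd'pos : (0:ℝ) < (d':ℝ) := by exact_mod_cast hd'
    have hab : (d:ℝ) * 𝒜.card = d' * ℬ.card := by exact_mod_cast hA.symm.trans hB
    have hsk : (s:ℝ) * K.card = d' * ℬ.card := by exact_mod_cast hKc.symm.trans hB
    have h1 : α * K.card ≤ d * S.card + d' * W.card := by
      have := mul_le_mul_of_nonneg_left key hα0.le
      calc α * (K.card:ℝ) ≤ α * (S.card * (d / α) + W.card * (d' / α)) := this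
        _ = d * S.card + d' * W.card := by field_simp
    have hba : (ℬ.card:ℝ) / 𝒜.card = d / d' := by
      rw [div_eq_div_iff hApos.ne' hd'pos.ne']; linarith
    have hbk : (ℬ.card:ℝ) = s * K.card / d' := by
      field_simp; linarith
    rw [hba, hbk]
    have h2 : α * ((s:ℝ) * K.card / d') / s = α * K.card / d' := by
      rw [div_eq_iff hspos.ne']; ring
    rw [h2, div_le_iff₀ hd'pos]
    calc α * (K.card:ℝ) ≤ d * S.card + d' * W.card := h1
      _ = ((d:ℝ) / d' * S.card + W.card) * d' := by
        rw [add_mul, mul_right_comm, div_mul_cancel₀ _ hd'pos.ne', mul_comm (W.card:ℝ)]
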